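/- If ψ : Ω × □^n → ℝ is an admissible function, then there exist a set X ⊆ Ω with |Ω \ X| = 0 and a set Y ⊆ □ with |□ \ Y| = 0 such that the restriction of ψ to X × Y^n is Borel measurable. In particular, for every fixed ε > 0 the function x ↦ ψ(x, ⟨x/ρ_1(ε)⟩, …, ⟨x/ρ_n(ε)⟩) is Lebesgue measurable on Ω. -/

import Mathlib

open MeasureTheory Filter Topology ENNReal Pointwise

lemma null_diff_aux {α : Type*} [MeasurableSpace α] (μ : Measure α)
    (A : Set α) (S : ℕ → Set α)
    (h : ∀ m, μ (A \ S m) ≤ ENNReal.ofReal ((2:ℝ)⁻¹ ^ m)) :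
    μ (A \ ⋃ M, ⋂ j, S (M + j)) = 0 := by
  have hofr : ∀ m : ℕ, ENNReal.ofReal ((2:ℝ)⁻¹ ^ m) = (2:ℝ≥0∞)⁻¹ ^ m := by
    intro m
    rw [ENNReal.ofReal_pow (by norm_num), ENNReal.ofReal_inv_of_pos (by norm_num)]
    norm_num
  have key : ∀ M : ℕ, μ (A \ ⋃ M, ⋂ j, S (M + j)) ≤ (2:ℝ≥0∞)⁻¹ ^ M * 2 := by
    intro M
    have h1 : A \ (⋃ M, ⋂ j, S (M + j)) ⊆ ⋃ j, (A \ S (M + j)) := by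
      intro x hx
      by_contra hc
      simp only [Set.mem_iUnion, not_exists, Set.mem_diff, not_and, not_not] at hc
      exact hx.2 (Set.mem_iUnion.2 ⟨M, Set.mem_iInter.2 fun j => hc j hx.1⟩)
    calc μ (A \ ⋃ M, ⋂ j, S (M + j)) ≤ ∑' j, μ (A \ S (M + j)) :=
          (measure_mono h1).trans (measure_iUnion_le _)
      _ ≤ ∑' j : ℕ, (2:ℝ≥0∞)⁻¹ ^ (M + j) := by
          refine ENNReal.tsum_le_tsum fun j => ?_
          rw [← hofr]; exact h _
      _ = (2:ℝ≥0∞)⁻¹ ^ M * ∑' j : ℕ, (2:ℝ≥0∞)⁻¹ ^ j := by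
          rw [← ENNReal.tsum_mul_left]
          exact tsum_congr fun j => (pow_add _ _ _)
      _ = (2:ℝ≥0∞)⁻¹ ^ M * 2 := by
          rw [ENNReal.tsum_geometric]
          congr 1
          rw [ENNReal.one_sub_inv_two, inv_inv]
  have htend : Tendsto (fun M : ℕ => (2:ℝ≥0∞)⁻¹ ^ M * 2) atTop (𝓝 0) := by
    have := ENNReal.Tendsto.mul_const
      (ENNReal.tendsto_pow_atTop_nhds_zero_of_lt_one (by norm_num : (2:ℝ≥0∞)⁻¹ < 1))
      (Or.inr (by norm_num : (2:ℝ≥0∞) ≠ ⊤))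
    simpa using this
  exact le_antisymm (ge_of_tendsto' htend key) zero_le

/-- The unit cell `□ = [0,1)^d` in `ℝ^d`. -/
def unitCell (d : ℕ) : Set (Fin d → ℝ) := Set.univ.pi fun _ => Set.Ico (0 : ℝ) 1

lemma fract_preimage_null {d : ℕ} {r : ℝ} (hr : 0 < r) {N : Set (Fin d → ℝ)}
    (hN0 : volume N = 0) :
    volume {x : Fin d → ℝ | (fun i => Int.fract (x i / r)) ∈ N} = 0 := by
  have hsub : {x : Fin d → ℝ | (fun i => Int.fract (x i / r)) ∈ N} ⊆
      ⋃ z : Fin d → ℤ, ((fun i => r * (z i : ℝ)) +ᵥ (r • N)) := by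
    intro x hx
    refine Set.mem_iUnion.2 ⟨fun i => ⌊x i / r⌋, ?_⟩
    refine ⟨r • fun i => Int.fract (x i / r), ?_, ?_⟩
    · exact Set.smul_mem_smul_set hx
    · funext i
      show r * (⌊x i / r⌋ : ℝ) + r * Int.fract (x i / r) = x i
      rw [← mul_add, Int.floor_add_fract, mul_div_cancel₀ _ hr.ne']
  refine measure_mono_null hsub (measure_iUnion_null fun z => ?_)
  rw [measure_vadd, Measure.addHaar_smul, hN0, mul_zero]

/-- A function `ψ : Ω × □^n → ℝ` is *admissible* if for every `δ > 0` there are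
compact sets `X ⊆ Ω` and `Y ⊆ □` whose complements have measure at most `δ`
such that the restriction of `ψ` to `X × Y^n` is continuous. -/
def AdmissibleFun {d n : ℕ} (Ω : Set (Fin d → ℝ))
    (ψ : (Fin d → ℝ) → (Fin n → Fin d → ℝ) → ℝ) : Prop :=
  ∀ δ > (0 : ℝ), ∃ X : Set (Fin d → ℝ),
    IsCompact X ∧ X ⊆ Ω ∧ volume (Ω \ X) ≤ ENNReal.ofReal δ ∧
    ∃ Y : Set (Fin d → ℝ),
      IsCompact Y ∧ Y ⊆ unitCell d ∧ volume (unitCell d \ Y) ≤ ENNReal.ofReal δ ∧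
      ContinuousOn (fun p : (Fin d → ℝ) × (Fin n → Fin d → ℝ) => ψ p.1 p.2)
        (X ×ˢ Set.univ.pi fun _ => Y)

/-- An admissible function is Borel measurable on a full-measure product set;
in particular `x ↦ ψ(x, ⟨x/ρ_1(ε)⟩, …, ⟨x/ρ_n(ε)⟩)` is Lebesgue measurable on `Ω`. -/
theorem statement3
    (d n : ℕ) (hd : 0 < d) (hn : 0 < n)
    (Ω : Set (Fin d → ℝ)) (hΩo : IsOpen Ω) (hΩb : Bornology.IsBounded Ω)
    (ρ : Fin n → ℝ → ℝ) (hρpos : ∀ k e, 0 < e → 0 < ρ k e)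
    (hρ0 : ∀ k, Tendsto (ρ k) (𝓝[>] 0) (𝓝 0))
    (ψ : (Fin d → ℝ) → (Fin n → Fin d → ℝ) → ℝ) (hψ : AdmissibleFun Ω ψ) :
    ∃ X ⊆ Ω, ∃ Y ⊆ unitCell d,
      volume (Ω \ X) = 0 ∧ volume (unitCell d \ Y) = 0 ∧
      Measurable ((X ×ˢ Set.univ.pi fun _ : Fin n => Y).restrict
        (fun p : (Fin d → ℝ) × (Fin n → Fin d → ℝ) => ψ p.1 p.2)) ∧
      ∀ e : ℝ, 0 < e →
        AEMeasurable (fun x => ψ x (fun k i => Int.fract (x i / ρ k e)))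
          (volume.restrict Ω) := by
  classical
  have hseq : ∀ m : ℕ, ∃ X : Set (Fin d → ℝ),
      IsCompact X ∧ X ⊆ Ω ∧ volume (Ω \ X) ≤ ENNReal.ofReal ((2:ℝ)⁻¹ ^ m) ∧
      ∃ Y : Set (Fin d → ℝ),
        IsCompact Y ∧ Y ⊆ unitCell d ∧
        volume (unitCell d \ Y) ≤ ENNReal.ofReal ((2:ℝ)⁻¹ ^ m) ∧
        ContinuousOn (fun p : (Fin d → ℝ) × (Fin n → Fin d → ℝ) => ψ p.1 p.2)
          (X ×ˢ Set.univ.pi fun _ => Y) :=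
    fun m => hψ _ (by positivity)
  choose Xs hXc hXΩ hXv Ys hYc hYcell hYv hcont using hseq
  set ψf : (Fin d → ℝ) × (Fin n → Fin d → ℝ) → ℝ := fun p => ψ p.1 p.2 with hψf
  set X' : ℕ → Set (Fin d → ℝ) := fun M => ⋂ j, Xs (M + j) with hX'
  set Y' : ℕ → Set (Fin d → ℝ) := fun M => ⋂ j, Ys (M + j) with hY'
  set X : Set (Fin d → ℝ) := ⋃ M, X' M with hX
  set Y : Set (Fin d → ℝ) := ⋃ M, Y' M with hY
  -- basic facts
  have hX'mono : ∀ {M M' : ℕ}, M ≤ M' → X' M ⊆ X' M' := by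
    intro M M' hMM x hx
    refine Set.mem_iInter.2 fun j => ?_
    have := Set.mem_iInter.1 hx ((M' - M) + j)
    rwa [show M + ((M' - M) + j) = M' + j by omega] at this
  have hY'mono : ∀ {M M' : ℕ}, M ≤ M' → Y' M ⊆ Y' M' := by
    intro M M' hMM x hx
    refine Set.mem_iInter.2 fun j => ?_
    have := Set.mem_iInter.1 hx ((M' - M) + j)
    rwa [show M + ((M' - M) + j) = M' + j by omega] at this
  have hX'sub : ∀ M, X' M ⊆ Xs M := by
    intro M x hx
    have := Set.mem_iInter.1 hx 0
    simpa using this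
  have hY'sub : ∀ M, Y' M ⊆ Ys M := by
    intro M y hy
    have := Set.mem_iInter.1 hy 0
    simpa using this
  have hX'closed : ∀ M, IsClosed (X' M) := fun M =>
    isClosed_iInter fun j => (hXc _).isClosed
  have hY'closed : ∀ M, IsClosed (Y' M) := fun M =>
    isClosed_iInter fun j => (hYc _).isClosed
  have hXsubΩ : X ⊆ Ω := Set.iUnion_subset fun M => (hX'sub M).trans (hXΩ M)
  have hYsubC : Y ⊆ unitCell d := Set.iUnion_subset fun M => (hY'sub M).trans (hYcell M)
  have hXnull : volume (Ω \ X) = 0 := null_diff_aux _ _ _ hXv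
  have hYnull : volume (unitCell d \ Y) = 0 := null_diff_aux _ _ _ hYv
  set SM : ℕ → Set ((Fin d → ℝ) × (Fin n → Fin d → ℝ)) :=
    fun M => X' M ×ˢ Set.univ.pi fun _ : Fin n => Y' M with hSM
  set S : Set ((Fin d → ℝ) × (Fin n → Fin d → ℝ)) :=
    X ×ˢ Set.univ.pi fun _ : Fin n => Y with hS
  have hSeq : S = ⋃ M, SM M := by
    apply Set.Subset.antisymm
    · rintro ⟨x, y⟩ ⟨hx, hy⟩
      obtain ⟨M0, hM0⟩ := Set.mem_iUnion.1 hx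
      have hyk : ∀ k : Fin n, ∃ M, y k ∈ Y' M := fun k =>
        Set.mem_iUnion.1 (hy k (Set.mem_univ k))
      choose m hm using hyk
      refine Set.mem_iUnion.2 ⟨M0 ⊔ Finset.univ.sup m, ?_⟩
      refine ⟨hX'mono le_sup_left hM0, fun k _ => ?_⟩
      exact hY'mono (le_sup_of_le_right (Finset.le_sup (Finset.mem_univ k))) (hm k)
    · refine Set.iUnion_subset fun M => ?_
      rintro ⟨x, y⟩ ⟨hx, hy⟩
      exact ⟨Set.mem_iUnion.2 ⟨M, hx⟩, fun k hk => Set.mem_iUnion.2 ⟨M, hy k hk⟩⟩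
  have hSMmeas : ∀ M, MeasurableSet (SM M) := fun M =>
    ((hX'closed M).measurableSet).prod
      (MeasurableSet.univ_pi fun k => (hY'closed M).measurableSet)
  have hSmeas : MeasurableSet S := by
    rw [hSeq]; exact MeasurableSet.iUnion hSMmeas
  have hrestrM : ∀ M, Measurable ((SM M).restrict ψf) := by
    intro M
    have hsub : SM M ⊆ Xs M ×ˢ Set.univ.pi fun _ : Fin n => Ys M := by
      rintro ⟨x, y⟩ ⟨hx, hy⟩
      exact ⟨hX'sub M hx, fun k hk => hY'sub M (hy k hk)⟩
    exact ((hcont M).mono hsub).restrict.measurable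
  have hpre : ∀ t : Set ℝ, MeasurableSet t → MeasurableSet (ψf ⁻¹' t ∩ S) := by
    intro t ht
    have heq : ψf ⁻¹' t ∩ S = ⋃ M, (ψf ⁻¹' t ∩ SM M) := by
      rw [hSeq, Set.inter_iUnion]
    rw [heq]
    refine MeasurableSet.iUnion fun M => ?_
    have h1 : MeasurableSet (((SM M).restrict ψf) ⁻¹' t) := hrestrM M ht
    have h2 := (hSMmeas M).subtype_image h1
    have him : Subtype.val '' (((SM M).restrict ψf) ⁻¹' t) = ψf ⁻¹' t ∩ SM M := by
      ext p
      constructor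
      · rintro ⟨⟨q, hq⟩, hq1, rfl⟩
        exact ⟨hq1, hq⟩
      · rintro ⟨hp1, hp2⟩
        exact ⟨⟨p, hp2⟩, hp1, rfl⟩
    rwa [him] at h2
  have hSrestr : Measurable (S.restrict ψf) := by
    intro t ht
    have : S.restrict ψf ⁻¹' t = Subtype.val ⁻¹' (ψf ⁻¹' t ∩ S) := by
      ext a
      simp only [Set.restrict_apply, Set.mem_preimage, Set.mem_inter_iff]
      exact ⟨fun h => ⟨h, a.2⟩, fun h => h.1⟩
    rw [this]
    exact measurable_subtype_coe (hpre t ht)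
  refine ⟨X, hXsubΩ, Y, hYsubC, hXnull, hYnull, hSrestr, ?_⟩
  -- second part
  intro e he
  set F : (Fin d → ℝ) × (Fin n → Fin d → ℝ) → ℝ :=
    fun p => if p ∈ S then ψf p else 0 with hF
  have hFmeas : Measurable F := by
    refine measurable_of_restrict_of_restrict_compl hSmeas ?_ ?_
    · have : S.restrict F = S.restrict ψf := funext fun a => if_pos a.2
      change Measurable (S.restrict F); rw [this]; exact hSrestr
    · have : Sᶜ.restrict F = fun _ => (0:ℝ) := funext fun a => if_neg a.2
      change Measurable (Sᶜ.restrict F); rw [this]; exact measurable_const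
  set g : (Fin d → ℝ) → (Fin d → ℝ) × (Fin n → Fin d → ℝ) :=
    fun x => (x, fun k i => Int.fract (x i / ρ k e)) with hg
  have hgmeas : Measurable g := by
    refine measurable_id.prodMk ?_
    refine measurable_pi_lambda _ fun k => measurable_pi_lambda _ fun i => ?_
    exact measurable_fract.comp ((measurable_pi_apply i).div_const _)
  refine ⟨F ∘ g, hFmeas.comp hgmeas, ?_⟩
  have hbad : volume ((Ω \ X) ∪
      ⋃ k : Fin n, {x : Fin d → ℝ |
        (fun i => Int.fract (x i / ρ k e)) ∈ unitCell d \ Y}) = 0 :=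
    measure_union_null hXnull
      (measure_iUnion_null fun k => fract_preimage_null (hρpos k e he) hYnull)
  rw [Filter.EventuallyEq, ae_iff, Measure.restrict_apply' hΩo.measurableSet]
  refine measure_mono_null ?_ hbad
  rintro x ⟨hne, hxΩ⟩
  by_contra hc
  simp only [Set.mem_union, Set.mem_iUnion, not_or, not_exists, Set.mem_diff,
    Set.mem_setOf_eq, not_and, not_not] at hc
  obtain ⟨hc1, hc2⟩ := hc
  have hxX : x ∈ X := hc1 hxΩ
  have hfr : ∀ k : Fin n, (fun i => Int.fract (x i / ρ k e)) ∈ Y := by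
    intro k
    refine hc2 k ?_
    intro i _
    exact ⟨Int.fract_nonneg _, Int.fract_lt_one _⟩
  have hgS : g x ∈ S := ⟨hxX, fun k _ => hfr k⟩
  exact hne (by simp only [Function.comp_apply, hF, if_pos hgS]; rfl)
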